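/- (Instrument unconfoundedness from the sampling construction.) Let Ω be a standard Borel space with a probability measure μ, let E1, E2, E3, E4 be standard Borel spaces, O : Ω → E1, U : Ω → E2, ξ : Ω → E3 measurable, and f : E1 × E3 → E4 measurable. Suppose ξ is independent of the pair ω ↦ (O ω, U ω) under μ, and define Z ω = f (O ω) (ξ ω). Then Z and U are conditionally independent given the σ-algebra generated by O (ProbabilityTheory.CondIndepFun with conditioning σ-algebra σ(O)). -/

import Mathlib

open MeasureTheory ProbabilityTheory Filter

theorem instrument_unconfoundedness {Ω E1 E2 E3 E4 : Type*}
    [MeasurableSpace Ω] [StandardBorelSpace Ω]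
    [MeasurableSpace E1] [StandardBorelSpace E1]
    [MeasurableSpace E2] [StandardBorelSpace E2]
    [MeasurableSpace E3] [StandardBorelSpace E3]
    [MeasurableSpace E4] [StandardBorelSpace E4]
    (μ : Measure Ω) [IsProbabilityMeasure μ]
    (O : Ω → E1) (U : Ω → E2) (ξ : Ω → E3) (f : E1 × E3 → E4)
    (hO : Measurable O) (hU : Measurable U) (hξ : Measurable ξ) (hf : Measurable f)
    (hindep : IndepFun ξ (fun ω => (O ω, U ω)) μ) :
    CondIndepFun (MeasurableSpace.comap O inferInstance)
      (measurable_iff_comap_le.mp hO) (fun ω => f (O ω, ξ ω)) U μ := by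
  set OU : Ω → E1 × E2 := fun ω => (O ω, U ω) with hOUdef
  have hOUm : Measurable OU := hO.prodMk hU
  have hm₂ : MeasurableSpace.comap OU inferInstance ≤ ‹MeasurableSpace Ω› :=
    measurable_iff_comap_le.mp hOUm
  have hm' : MeasurableSpace.comap O inferInstance ≤ ‹MeasurableSpace Ω› :=
    measurable_iff_comap_le.mp hO
  have hm'₂ : MeasurableSpace.comap O inferInstance
      ≤ MeasurableSpace.comap OU inferInstance := by
    rintro B ⟨b, hb, rfl⟩
    exact ⟨b ×ˢ Set.univ, hb.prod MeasurableSet.univ, by ext ω; simp [OU]⟩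
  set W : Ω → E1 × E3 := fun ω => (O ω, ξ ω) with hWdef
  have hW : Measurable W := hO.prodMk hξ
  have main : CondIndepFun (MeasurableSpace.comap O inferInstance) hm' W U μ := by
    rw [condIndepFun_iff_condExp_inter_preimage_eq_mul hW hU]
    intro s t hs ht
    -- the law of ξ
    set ν : Measure E3 := μ.map ξ with hνdef
    haveI : IsProbabilityMeasure ν := Measure.isProbabilityMeasure_map hξ.aemeasurable
    set F : E1 → ENNReal := fun o => ν (Prod.mk o ⁻¹' s) with hFdef
    have hFmeas : Measurable F := measurable_measure_prodMk_left hs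
    have hFle : ∀ o, F o ≤ 1 := fun o => prob_le_one
    set G : Ω → ℝ := fun ω => (F (O ω)).toReal with hGdef
    have hOm' : Measurable[MeasurableSpace.comap O inferInstance] O :=
      measurable_iff_comap_le.mpr le_rfl
    have hGm' : Measurable[MeasurableSpace.comap O inferInstance] G :=
      (ENNReal.measurable_toReal.comp hFmeas).comp hOm'
    have hGm : Measurable G := hGm'.mono hm' le_rfl
    have hGsm' : StronglyMeasurable[MeasurableSpace.comap O inferInstance] G :=
      hGm'.stronglyMeasurable
    have hGbd : ∀ ω, ‖G ω‖ ≤ 1 := by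
      intro ω
      rw [Real.norm_eq_abs, abs_of_nonneg ENNReal.toReal_nonneg]
      exact ENNReal.toReal_le_of_le_ofReal one_pos.le (by simpa using hFle (O ω))
    have hGint : Integrable G μ :=
      (integrable_const (1 : ℝ)).mono' hGm.aestronglyMeasurable (ae_of_all _ hGbd)
    -- key identity
    have key : ∀ t' : Set (E1 × E2), MeasurableSet t' →
        μ (W ⁻¹' s ∩ OU ⁻¹' t') = ∫⁻ ω in OU ⁻¹' t', F (O ω) ∂μ := by
      intro t' ht'
      have hmap : μ.map (fun ω => (OU ω, ξ ω)) = (μ.map OU).prod ν :=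
        (indepFun_iff_map_prod_eq_prod_map_map hOUm.aemeasurable hξ.aemeasurable).mp
          hindep.symm
      set S : Set ((E1 × E2) × E3) := {p | (p.1.1, p.2) ∈ s ∧ p.1 ∈ t'} with hSdef
      have hSmeas : MeasurableSet S :=
        (((measurable_fst.fst.prodMk measurable_snd) hs).inter (measurable_fst ht'))
      have hpre : W ⁻¹' s ∩ OU ⁻¹' t' = (fun ω => (OU ω, ξ ω)) ⁻¹' S := by
        ext ω; simp [S, W, OU, Set.mem_preimage]
      rw [hpre, ← Measure.map_apply (hOUm.prodMk hξ) hSmeas, hmap,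
        Measure.prod_apply hSmeas]
      have hsec : (fun q : E1 × E2 => ν (Prod.mk q ⁻¹' S)) =
          t'.indicator (fun q => F q.1) := by
        funext q
        by_cases hq : q ∈ t'
        · rw [Set.indicator_of_mem hq]
          congr 1
          ext x; simp [S, hq]
        · rw [Set.indicator_of_notMem hq]
          have : Prod.mk q ⁻¹' S = ∅ := by ext x; simp [S, hq]
          rw [this, measure_empty]
      calc ∫⁻ q, ν (Prod.mk q ⁻¹' S) ∂(μ.map OU)
          = ∫⁻ q, t'.indicator (fun q => F q.1) q ∂(μ.map OU) :=
            lintegral_congr fun q => congrFun hsec q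
        _ = ∫⁻ q in t', F q.1 ∂(μ.map OU) := lintegral_indicator ht' _
        _ = ∫⁻ ω in OU ⁻¹' t', F (O ω) ∂μ :=
            setLIntegral_map ht' (hFmeas.comp measurable_fst) hOUm
    -- conditional expectation of the indicator of W ⁻¹' s given σ(O,U) is G
    have hB : (μ⟦W ⁻¹' s | MeasurableSpace.comap OU inferInstance⟧) =ᵐ[μ] G := by
      refine (ae_eq_condExp_of_forall_setIntegral_eq hm₂
        ((integrable_const (1 : ℝ)).indicator (hW hs))
        (fun B _ _ => hGint.integrableOn) ?_
        ⟨G, (hGm'.mono hm'₂ le_rfl).stronglyMeasurable, EventuallyEq.rfl⟩).symm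
      rintro B ⟨t', ht', rfl⟩ -
      have hlhs : ∫ x in OU ⁻¹' t', G x ∂μ = (μ (W ⁻¹' s ∩ OU ⁻¹' t')).toReal := by
        rw [key t' ht']
        have hmeasFO : AEMeasurable (fun ω => F (O ω)) (μ.restrict (OU ⁻¹' t')) :=
          (hFmeas.comp hO).aemeasurable.restrict
        rw [← integral_toReal hmeasFO
          (ae_of_all _ fun ω => lt_of_le_of_lt (hFle (O ω)) ENNReal.one_lt_top)]
      have hrhs : ∫ x in OU ⁻¹' t', (W ⁻¹' s).indicator (fun _ => (1 : ℝ)) x ∂μ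
          = (μ (W ⁻¹' s ∩ OU ⁻¹' t')).toReal := by
        rw [setIntegral_indicator (hW hs), setIntegral_const, smul_eq_mul, mul_one,
          Set.inter_comm]
        rfl
      rw [hlhs, hrhs]
    -- conditional expectation given σ(O) is also G
    have hA : (μ⟦W ⁻¹' s | MeasurableSpace.comap O inferInstance⟧) =ᵐ[μ] G := by
      have h1 := (condExp_condExp_of_le (μ := μ)
        (f := (W ⁻¹' s).indicator fun _ => (1 : ℝ)) hm'₂ hm₂).symm
      have h2 : μ[μ⟦W ⁻¹' s | MeasurableSpace.comap OU inferInstance⟧ |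
          MeasurableSpace.comap O inferInstance]
          =ᵐ[μ] μ[G | MeasurableSpace.comap O inferInstance] := condExp_congr_ae hB
      have h3 : μ[G | MeasurableSpace.comap O inferInstance] = G :=
        condExp_of_stronglyMeasurable hm' hGsm' hGint
      exact (h1.trans h2).trans (by rw [h3])
    -- now the product identity
    set B : Set Ω := U ⁻¹' t with hBdef
    have hBmeas : MeasurableSet B := hU ht
    have hBm₂ : MeasurableSet[MeasurableSpace.comap OU inferInstance] B :=
      ⟨Set.univ ×ˢ t, MeasurableSet.univ.prod ht, by ext ω; simp [OU, B]⟩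
    have h1Bsm : StronglyMeasurable[MeasurableSpace.comap OU inferInstance]
        (B.indicator fun _ => (1 : ℝ)) :=
      stronglyMeasurable_const.indicator hBm₂
    have hind : (W ⁻¹' s ∩ B).indicator (fun _ => (1 : ℝ)) =
        (B.indicator fun _ => (1 : ℝ)) * ((W ⁻¹' s).indicator fun _ => (1 : ℝ)) := by
      funext ω
      by_cases h1 : ω ∈ W ⁻¹' s <;> by_cases h2 : ω ∈ B <;>
        simp [Set.indicator_apply, h1, h2]
    have hintWB : Integrable ((W ⁻¹' s ∩ B).indicator fun _ => (1 : ℝ)) μ :=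
      (integrable_const (1 : ℝ)).indicator ((hW hs).inter hBmeas)
    have hint1B : Integrable (B.indicator fun _ => (1 : ℝ)) μ :=
      (integrable_const (1 : ℝ)).indicator hBmeas
    have hint1A : Integrable ((W ⁻¹' s).indicator fun _ => (1 : ℝ)) μ :=
      (integrable_const (1 : ℝ)).indicator (hW hs)
    have step1 : (μ⟦W ⁻¹' s ∩ B | MeasurableSpace.comap OU inferInstance⟧) =ᵐ[μ]
        (B.indicator fun _ => (1 : ℝ)) * G := by
      calc (μ⟦W ⁻¹' s ∩ B | MeasurableSpace.comap OU inferInstance⟧)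
          = μ[(B.indicator fun _ => (1 : ℝ)) *
              ((W ⁻¹' s).indicator fun _ => (1 : ℝ)) |
              MeasurableSpace.comap OU inferInstance] := by rw [← hind]
        _ =ᵐ[μ] (B.indicator fun _ => (1 : ℝ)) *
              (μ⟦W ⁻¹' s | MeasurableSpace.comap OU inferInstance⟧) :=
            condExp_mul_of_stronglyMeasurable_left h1Bsm (by rw [← hind]; exact hintWB) hint1A
        _ =ᵐ[μ] (B.indicator fun _ => (1 : ℝ)) * G :=
            EventuallyEq.mul EventuallyEq.rfl hB
    have hGBint : Integrable (G * (B.indicator fun _ => (1 : ℝ))) μ := by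
      refine (integrable_const (1 : ℝ)).mono'
        ((hGm.mul (measurable_const.indicator hBmeas)).aestronglyMeasurable)
        (ae_of_all _ fun ω => ?_)
      calc ‖G ω * B.indicator (fun _ => (1 : ℝ)) ω‖
          = ‖G ω‖ * ‖B.indicator (fun _ => (1 : ℝ)) ω‖ := norm_mul _ _
        _ ≤ 1 * 1 := by
            refine mul_le_mul (hGbd ω) ?_ (norm_nonneg _) zero_le_one
            by_cases h : ω ∈ B <;> simp [Set.indicator_apply, h]
        _ = 1 := one_mul 1
    calc (μ⟦W ⁻¹' s ∩ B | MeasurableSpace.comap O inferInstance⟧)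
        =ᵐ[μ] μ[μ⟦W ⁻¹' s ∩ B | MeasurableSpace.comap OU inferInstance⟧ |
            MeasurableSpace.comap O inferInstance] :=
          (condExp_condExp_of_le hm'₂ hm₂).symm
      _ =ᵐ[μ] μ[(B.indicator fun _ => (1 : ℝ)) * G |
            MeasurableSpace.comap O inferInstance] := condExp_congr_ae step1
      _ = μ[G * (B.indicator fun _ => (1 : ℝ)) |
            MeasurableSpace.comap O inferInstance] := by rw [mul_comm]
      _ =ᵐ[μ] G * (μ⟦B | MeasurableSpace.comap O inferInstance⟧) :=
          condExp_mul_of_stronglyMeasurable_left hGsm' hGBint hint1B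
      _ =ᵐ[μ] fun ω => (μ⟦W ⁻¹' s | MeasurableSpace.comap O inferInstance⟧) ω *
            (μ⟦B | MeasurableSpace.comap O inferInstance⟧) ω :=
          EventuallyEq.mul hA.symm EventuallyEq.rfl
  exact main.comp hf measurable_id
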